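/- Let k be an algebraically closed field of characteristic zero and A, B ∈ k[[z]] of order at least 2. Then the equation X ∘ A = Y ∘ B has a solution with X, Y ∈ z·k[[z]] if and only if φ_A ∘ φ_B = φ_B ∘ φ_A for all transition functions φ_A of A and φ_B of B (order-1 series with A ∘ φ_A = A and B ∘ φ_B = B). -/

import Mathlib

open PowerSeries

/-- Composition (substitution) `comp A B = A ∘ B` of formal power series,
the standard coefficient formula, well-behaved when `B` has zero constant term. -/
noncomputable def comp {k : Type*} [Field k] (A B : PowerSeries k) : PowerSeries k :=
  PowerSeries.mk fun n =>
    ∑ i ∈ Finset.range (n + 1), (PowerSeries.coeff i A) * (PowerSeries.coeff n (B ^ i))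

/-- `iterComp φ j` is the `j`-fold compositional iterate `φ^{∘j}` (with `φ^{∘0} = z`). -/
noncomputable def iterComp {k : Type*} [Field k] (φ : PowerSeries k) : ℕ → PowerSeries k
  | 0 => PowerSeries.X
  | n + 1 => comp φ (iterComp φ n)

/-- Composition of a list of power series: `compList [A₁, …, A_r] = A₁ ∘ ⋯ ∘ A_r`. -/
noncomputable def compList {k : Type*} [Field k] : List (PowerSeries k) → PowerSeries k
  | [] => PowerSeries.X
  | a :: t => comp a (compList t)

namespace CompAux

variable {k : Type*} [Field k]

lemma coeff_comp (a b : PowerSeries k) (n : ℕ) :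
    coeff n (comp a b) = ∑ i ∈ Finset.range (n + 1), coeff i a * coeff n (b ^ i) := by
  simp [comp]

lemma coeff_pow_vanish {b : PowerSeries k} {e : ℕ} (hb : ∀ j < e, coeff j b = 0)
    (i d : ℕ) (h : d < e * i) : coeff d (b ^ i) = 0 := by
  have h1 : (X : PowerSeries k) ^ e ∣ b := X_pow_dvd_iff.mpr hb
  have h2 : (X : PowerSeries k) ^ (e * i) ∣ b ^ i := by
    rw [pow_mul]; exact pow_dvd_pow_of_dvd h1 i
  exact X_pow_dvd_iff.mp h2 d h

lemma coeff_pow_vanish0 {b : PowerSeries k} (hb : constantCoeff b = 0)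
    {i d : ℕ} (h : d < i) : coeff d (b ^ i) = 0 := by
  apply coeff_pow_vanish (e := 1) _ i d (by omega)
  intro j hj
  interval_cases j
  simpa using hb

lemma coeff_comp_ge {a b : PowerSeries k} (hb : constantCoeff b = 0) {n M : ℕ}
    (hM : n < M) :
    coeff n (comp a b) = ∑ i ∈ Finset.range M, coeff i a * coeff n (b ^ i) := by
  rw [coeff_comp]
  apply Finset.sum_subset (Finset.range_subset_range.mpr hM)
  intro i _ hi
  rw [Finset.mem_range] at hi
  rw [coeff_pow_vanish0 hb (by omega), mul_zero]

lemma comp_add (a a' b : PowerSeries k) : comp (a + a') b = comp a b + comp a' b := by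
  ext n
  simp [coeff_comp, add_mul, Finset.sum_add_distrib]

lemma comp_one (b : PowerSeries k) : comp (1 : PowerSeries k) b = 1 := by
  ext n
  rw [coeff_comp, Finset.sum_eq_single 0]
  · simp
  · intro i _ hi; simp [coeff_one, hi]
  · simp

lemma comp_zero (b : PowerSeries k) : comp (0 : PowerSeries k) b = 0 := by
  ext n; simp [coeff_comp]

lemma comp_C (c : k) (b : PowerSeries k) : comp (C c) b = C c := by
  ext n
  rw [coeff_comp, Finset.sum_eq_single 0]
  · simp [coeff_C]
  · intro i _ hi; simp [coeff_C, hi]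
  · simp

lemma comp_mul {b : PowerSeries k} (hb : constantCoeff b = 0) (a a' : PowerSeries k) :
    comp (a * a') b = comp a b * comp a' b := by
  ext n
  rw [coeff_comp, PowerSeries.coeff_mul]
  have hL : ∀ i ∈ Finset.range (n + 1),
      coeff i (a * a') * coeff n (b ^ i)
        = ∑ p ∈ Finset.HasAntidiagonal.antidiagonal i,
            coeff p.1 a * coeff p.2 a' * coeff n (b ^ (p.1 + p.2)) := by
    intro i hi
    rw [PowerSeries.coeff_mul, Finset.sum_mul]
    apply Finset.sum_congr rfl
    intro p hp
    rw [Finset.HasAntidiagonal.mem_antidiagonal] at hp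
    rw [hp]
  rw [Finset.sum_congr rfl hL]
  -- LHS is now a sum over a biUnion of antidiagonals
  have hdisj : ((Finset.range (n + 1) : Finset ℕ) : Set ℕ).PairwiseDisjoint
      (fun i => (Finset.HasAntidiagonal.antidiagonal i : Finset (ℕ × ℕ))) := by
    intro x _ y _ hxy
    simp only [Finset.disjoint_left]
    intro p hpx hpy
    rw [Finset.HasAntidiagonal.mem_antidiagonal] at hpx hpy
    exact hxy (hpx ▸ hpy)
  rw [← Finset.sum_biUnion hdisj]
  have hsub : (Finset.range (n + 1)).biUnion (fun i => Finset.HasAntidiagonal.antidiagonal i)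
      ⊆ Finset.range (n + 1) ×ˢ Finset.range (n + 1) := by
    intro p hp
    simp only [Finset.mem_biUnion, Finset.mem_range, Finset.HasAntidiagonal.mem_antidiagonal] at hp
    obtain ⟨i, hi, hpi⟩ := hp
    simp only [Finset.mem_product, Finset.mem_range]
    omega
  rw [Finset.sum_subset hsub ?_]
  · -- now RHS
    have hR : ∀ p ∈ Finset.HasAntidiagonal.antidiagonal n,
        coeff p.1 (comp a b) * coeff p.2 (comp a' b)
          = ∑ q ∈ Finset.range (n+1) ×ˢ Finset.range (n+1),
              coeff q.1 a * coeff q.2 a' * (coeff p.1 (b ^ q.1) * coeff p.2 (b ^ q.2)) := by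
      intro p hp
      rw [Finset.HasAntidiagonal.mem_antidiagonal] at hp
      rw [coeff_comp_ge hb (M := n+1) (by omega), coeff_comp_ge hb (M := n+1) (by omega),
        Finset.sum_mul_sum]
      rw [Finset.sum_product]
      apply Finset.sum_congr rfl; intro i _
      apply Finset.sum_congr rfl; intro j _
      ring
    rw [Finset.sum_congr rfl hR, Finset.sum_comm]
    apply Finset.sum_congr rfl
    intro q _
    rw [← Finset.mul_sum, ← PowerSeries.coeff_mul, ← pow_add]
  · intro p hp hnp
    simp only [Finset.mem_product, Finset.mem_range] at hp
    have : n < p.1 + p.2 := by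
      by_contra hle
      apply hnp
      simp only [Finset.mem_biUnion]
      exact ⟨p.1 + p.2, Finset.mem_range.mpr (by omega), Finset.HasAntidiagonal.mem_antidiagonal.mpr rfl⟩
    rw [coeff_pow_vanish0 hb this, mul_zero]

lemma comp_pow {b : PowerSeries k} (hb : constantCoeff b = 0) (a : PowerSeries k) (j : ℕ) :
    comp (a ^ j) b = (comp a b) ^ j := by
  induction j with
  | zero => simpa using comp_one b
  | succ j ih => rw [pow_succ, comp_mul hb, ih, pow_succ]

lemma comp_sub {b : PowerSeries k} (a a' : PowerSeries k) :
    comp (a - a') b = comp a b - comp a' b := by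
  ext n
  simp [coeff_comp, sub_mul, Finset.sum_sub_distrib]

lemma comp_C_mul {b : PowerSeries k} (c : k) (a : PowerSeries k) :
    comp (C c * a) b = C c * comp a b := by
  ext n
  simp [coeff_comp, Finset.mul_sum, mul_assoc]

lemma comp_prod {b : PowerSeries k} (hb : constantCoeff b = 0) {ι : Type*}
    (s : Finset ι) (f : ι → PowerSeries k) :
    comp (∏ i ∈ s, f i) b = ∏ i ∈ s, comp (f i) b := by
  classical
  induction s using Finset.induction with
  | empty => simpa using comp_one b
  | @insert a s hnotmem ih =>
      rw [Finset.prod_insert hnotmem, comp_mul hb, ih, Finset.prod_insert hnotmem]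

lemma comp_assoc {b c : PowerSeries k} (a : PowerSeries k)
    (hb : constantCoeff b = 0) (hc : constantCoeff c = 0) :
    comp (comp a b) c = comp a (comp b c) := by
  ext n
  rw [coeff_comp, coeff_comp]
  have hL : ∀ i ∈ Finset.range (n + 1),
      coeff i (comp a b) * coeff n (c ^ i)
        = ∑ j ∈ Finset.range (n+1), coeff j a * (coeff i (b ^ j) * coeff n (c ^ i)) := by
    intro i hi
    rw [Finset.mem_range] at hi
    rw [coeff_comp_ge hb (M := n+1) (by omega), Finset.sum_mul]
    apply Finset.sum_congr rfl; intro j _; ring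
  rw [Finset.sum_congr rfl hL, Finset.sum_comm]
  apply Finset.sum_congr rfl
  intro j _
  rw [← comp_pow hc, coeff_comp_ge (a := b ^ j) (b := c) hc (M := n+1) (by omega), Finset.mul_sum]

lemma constantCoeff_comp (a b : PowerSeries k) :
    constantCoeff (comp a b) = constantCoeff a := by
  rw [← coeff_zero_eq_constantCoeff, coeff_comp]
  simp

lemma comp_X_right (a : PowerSeries k) : comp a X = a := by
  ext n
  rw [coeff_comp, Finset.sum_eq_single n]
  · simp [coeff_X_pow]
  · intro i _ hi; simp [coeff_X_pow, (Ne.symm hi)]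
  · intro h; exact absurd (Finset.self_mem_range_succ n) h

lemma comp_X_left {b : PowerSeries k} (hb : constantCoeff b = 0) : comp X b = b := by
  ext n
  rw [coeff_comp]
  rcases Nat.eq_zero_or_pos n with rfl | hn
  · simpa using hb.symm
  · rw [Finset.sum_eq_single 1]
    · simp
    · intro i _ hi; simp [coeff_X, hi]
    · intro h; exact absurd (Finset.mem_range.mpr (by omega)) h

end CompAux

section Part2
open CompAux
variable {k : Type*} [Field k]


lemma coeff_one_comp' {a b : PowerSeries k} :
    coeff 1 (comp a b) = coeff 1 a * coeff 1 b := by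
  rw [CompAux.coeff_comp]
  rw [Finset.sum_range_succ, Finset.sum_range_one]
  simp

lemma coeff_pow_order {b : PowerSeries k} {e : ℕ} (hb : ∀ j < e, coeff j b = 0) (i : ℕ) :
    coeff (e * i) (b ^ i) = (coeff e b) ^ i := by
  induction i with
  | zero => simp
  | succ i ih =>
      rw [pow_succ, PowerSeries.coeff_mul, Finset.sum_eq_single (e * i, e)]
      · rw [ih, pow_succ]
      · rintro ⟨u, v⟩ hm hne
        rw [Finset.HasAntidiagonal.mem_antidiagonal] at hm
        rw [Nat.mul_succ] at hm
        simp only at hm hne ⊢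
        rcases lt_or_ge u (e * i) with h | h
        · rw [CompAux.coeff_pow_vanish hb i u h, zero_mul]
        · have hcase : v < e ∨ (u = e * i ∧ v = e) := by omega
          rcases hcase with h' | ⟨h1, h2⟩
          · rw [hb v h', mul_zero]
          · exact absurd (Prod.ext h1 h2) hne
      · intro hnm
        exact absurd (Finset.HasAntidiagonal.mem_antidiagonal.mpr (by ring)) hnm

lemma coeff_comp_orderterm {a b : PowerSeries k} {d e : ℕ}
    (ha : ∀ j < d, coeff j a = 0) (hb : ∀ j < e, coeff j b = 0) (he : 1 ≤ e) :
    coeff (d * e) (comp a b) = coeff d a * (coeff e b) ^ d := by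
  have hb0 : constantCoeff b = 0 := by
    rw [← coeff_zero_eq_constantCoeff]; exact hb 0 (by omega)
  rw [CompAux.coeff_comp, Finset.sum_eq_single d]
  · rw [mul_comm d e, coeff_pow_order hb]
  · intro i _ hi
    rcases lt_or_ge i d with h | h
    · rw [ha i h, zero_mul]
    · have : d * e < e * i := by
        have hdi : d < i := by omega
        nlinarith
      rw [CompAux.coeff_pow_vanish hb i _ this, mul_zero]
  · intro h
    exact absurd (Finset.mem_range.mpr (by nlinarith)) h

/-- numeric order data: for a nonzero series, its order as a natural number -/
lemma ord_data {a : PowerSeries k} (ha : a ≠ 0) :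
    ∃ d : ℕ, a.order = d ∧ coeff d a ≠ 0 ∧ ∀ j < d, coeff j a = 0 := by
  have hfin : a.order ≠ ⊤ := fun h => ha (PowerSeries.order_eq_top.mp h)
  lift a.order to ℕ using hfin with d hd
  refine ⟨d, rfl, ?_⟩
  have := (PowerSeries.order_eq_nat (φ := a) (n := d)).mp hd.symm
  exact this

lemma comp_ne_zero {a b : PowerSeries k} (ha : a ≠ 0) (hb0 : constantCoeff b = 0)
    (hb : b ≠ 0) : comp a b ≠ 0 := by
  obtain ⟨d, _, had, hal⟩ := ord_data ha
  obtain ⟨e, _, hbe, hbl⟩ := ord_data hb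
  have he : 1 ≤ e := by
    by_contra h
    have : e = 0 := by omega
    rw [this, coeff_zero_eq_constantCoeff] at hbe
    exact hbe hb0
  intro h
  have := coeff_comp_orderterm hal hbl he
  rw [h] at this
  simp only [map_zero] at this
  exact had (by
    have := this.symm
    rcases mul_eq_zero.mp this with h1 | h1
    · exact h1
    · exact absurd h1 (pow_ne_zero _ hbe))

lemma coeff_comp_C_mul_X {a : PowerSeries k} (z : k) (m : ℕ) :
    coeff m (comp a (C z * X)) = z ^ m * coeff m a := by
  rw [CompAux.coeff_comp, Finset.sum_eq_single m]
  · rw [mul_pow, ← map_pow, coeff_C_mul, coeff_X_pow]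
    simp [mul_comm]
  · intro i _ hi
    rw [mul_pow, ← map_pow, coeff_C_mul, coeff_X_pow]
    simp [Ne.symm hi]
  · intro h; exact absurd (Finset.self_mem_range_succ m) h

lemma coeff_comp_X_pow {a : PowerSeries k} {e : ℕ} (he : 1 ≤ e) (m : ℕ) :
    coeff m (comp a (X ^ e)) = if e ∣ m then coeff (m / e) a else 0 := by
  rw [CompAux.coeff_comp]
  have key : ∀ i : ℕ, coeff m (((X : PowerSeries k) ^ e) ^ i) = if m = e * i then 1 else 0 := by
    intro i; rw [← pow_mul, coeff_X_pow]
  by_cases h : e ∣ m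
  · obtain ⟨i, hi⟩ := h
    rw [if_pos ⟨i, hi⟩, Finset.sum_eq_single i]
    · rw [key, if_pos hi, mul_one, hi, Nat.mul_div_cancel_left _ (by omega : 0 < e)]
    · intro j _ hj
      rw [key, if_neg, mul_zero]
      intro hc
      exact hj (Nat.eq_of_mul_eq_mul_left (by omega) (hi ▸ hc)).symm
    · intro hnm
      exfalso; apply hnm
      rw [Finset.mem_range]
      have := Nat.le_mul_of_pos_left i (show 0 < e by omega)
      omega
  · rw [if_neg h]
    apply Finset.sum_eq_zero
    intro i _
    rw [key, if_neg (fun hc => h ⟨i, hc⟩), mul_zero]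

end Part2
section Part3
open CompAux
variable {k : Type*} [Field k]

/-- iterative construction of a power series by triangular recursion -/
noncomputable def buildT (g : ℕ → PowerSeries k → k) : ℕ → PowerSeries k
  | 0 => 0
  | j + 1 => buildT g j + C (g j (buildT g j)) * X ^ j

noncomputable def buildC (g : ℕ → PowerSeries k → k) (j : ℕ) : k := g j (buildT g j)

noncomputable def buildS (g : ℕ → PowerSeries k → k) : PowerSeries k :=
  PowerSeries.mk (buildC g)

lemma coeff_buildT (g : ℕ → PowerSeries k → k) (j i : ℕ) :
    coeff i (buildT g j) = if i < j then buildC g i else 0 := by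
  induction j with
  | zero => simp [buildT]
  | succ j ih =>
      rw [buildT, map_add, ih, coeff_C_mul, coeff_X_pow]
      rcases Nat.lt_trichotomy i j with h | h | h
      · rw [if_pos h, if_pos (show i < j + 1 by omega), if_neg (show ¬ i = j by omega),
          mul_zero, add_zero]
      · subst h
        rw [if_neg (lt_irrefl i), if_pos rfl, if_pos (show i < i + 1 by omega), mul_one, zero_add]
        rfl
      · rw [if_neg (show ¬ i < j by omega), if_neg (show ¬ i = j by omega),
          if_neg (show ¬ i < j + 1 by omega), mul_zero, add_zero]

lemma buildT_spec (g : ℕ → PowerSeries k → k) (j i : ℕ) :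
    coeff i (buildT g j) = if i < j then coeff i (buildS g) else 0 := by
  rw [coeff_buildT]; simp [buildS]

lemma coeff_buildS (g : ℕ → PowerSeries k → k) (i : ℕ) :
    coeff i (buildS g) = g i (buildT g i) := by
  simp [buildS, buildC]

/-- coefficient at the exact order of a product with an `X^j`-divisible factor -/
lemma coeff_mul_top {P D : PowerSeries k} {u j : ℕ}
    (hP : ∀ i < u, coeff i P = 0) (hD : ∀ i < j, coeff i D = 0) :
    coeff (u + j) (P * D) = coeff u P * coeff j D := by
  rw [PowerSeries.coeff_mul, Finset.sum_eq_single (u, j)]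
  · rintro ⟨x, y⟩ hm hne
    rw [Finset.HasAntidiagonal.mem_antidiagonal] at hm
    simp only at hm hne ⊢
    rcases lt_or_ge x u with h | h
    · rw [hP x h, zero_mul]
    · have : y < j ∨ (x = u ∧ y = j) := by omega
      rcases this with h' | ⟨h1, h2⟩
      · rw [hD y h', mul_zero]
      · exact absurd (Prod.ext h1 h2) hne
  · intro hnm
    have hmem : (u, j) ∈ Finset.HasAntidiagonal.antidiagonal (u + j) := Finset.HasAntidiagonal.mem_antidiagonal.mpr rfl
    exact absurd hmem hnm

/-- isolating the top coefficient in a power -/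
lemma coeff_pow_split {v P : PowerSeries k} {j N : ℕ} (hj : 1 ≤ j) (hN : 1 ≤ N)
    (hP : ∀ i, coeff i P = if i < j then coeff i v else 0) :
    coeff j (v ^ N) = coeff j (P ^ N)
      + (N : k) * (constantCoeff v) ^ (N - 1) * coeff j v := by
  obtain ⟨M, rfl⟩ : ∃ M, N = M + 1 := ⟨N - 1, by omega⟩
  have hDcoeff : ∀ m < j, coeff m (v - P) = 0 := by
    intro m hm; rw [map_sub, hP, if_pos hm, sub_self]
  have hD : (X : PowerSeries k) ^ j ∣ (v - P) := X_pow_dvd_iff.mpr hDcoeff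
  have hP0 : constantCoeff P = constantCoeff v := by
    have h0 := hP 0
    rw [if_pos (show (0:ℕ) < j by omega)] at h0
    rw [coeff_zero_eq_constantCoeff_apply, coeff_zero_eq_constantCoeff_apply] at h0
    exact h0
  have hDj : coeff j (v - P) = coeff j v := by
    rw [map_sub, hP, if_neg (by omega), sub_zero]
  have hv : v = P + (v - P) := by ring
  rw [hv, add_pow, map_sum, Finset.sum_range_succ, Finset.sum_range_succ]
  have hzero : ∀ l ∈ Finset.range M,
      coeff j (P ^ l * (v - P) ^ (M + 1 - l) * ((M+1).choose l : PowerSeries k)) = 0 := by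
    intro l hl
    rw [Finset.mem_range] at hl
    have h2 : (X : PowerSeries k) ^ (j * (M + 1 - l)) ∣
        P ^ l * (v - P) ^ (M + 1 - l) * ((M+1).choose l : PowerSeries k) := by
      apply Dvd.dvd.mul_right; apply Dvd.dvd.mul_left
      rw [pow_mul]; exact pow_dvd_pow_of_dvd hD _
    apply X_pow_dvd_iff.mp h2
    have h3 : 2 ≤ M + 1 - l := by omega
    nlinarith
  rw [Finset.sum_eq_zero hzero, zero_add]
  have hlast : P ^ (M+1) * (v - P) ^ (M + 1 - (M+1)) * ((M+1).choose (M+1) : PowerSeries k)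
      = P ^ (M+1) := by
    rw [Nat.sub_self, pow_zero, Nat.choose_self]; simp
  rw [hlast]
  have hmid : coeff j (P ^ M * (v - P) ^ (M + 1 - M) * ((M+1).choose M : PowerSeries k))
      = (M + 1 : k) * (constantCoeff v) ^ M * coeff j v := by
    have h1 : M + 1 - M = 1 := by omega
    rw [h1, pow_one, Nat.choose_succ_self_right]
    have hcast : ((M + 1 : ℕ) : PowerSeries k) = C ((M + 1 : ℕ) : k) := by
      rw [map_natCast C]
    rw [hcast, mul_comm (P ^ M * (v - P)) _, coeff_C_mul]
    have hmt := coeff_mul_top (P := P ^ M) (D := v - P) (u := 0) (j := j)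
      (by intro i hi; omega) hDcoeff
    rw [zero_add] at hmt
    rw [hmt, coeff_zero_eq_constantCoeff, map_pow, hP0, hDj]
    push_cast
    ring
  rw [hmid]
  have h2 : M + 1 - 1 = M := by omega
  rw [h2]
  push_cast
  ring
end Part3
section Part4
open CompAux
variable {k : Type*} [Field k]

lemma coeff_pow_split' {v P : PowerSeries k} {t n : ℕ} (hn : 2 ≤ n) (ht : 1 ≤ t)
    (h0 : constantCoeff v = 0)
    (hP : ∀ i, coeff i P = if i < t + 1 then coeff i v else 0) :
    coeff (n + t) (v ^ n) = coeff (n + t) (P ^ n)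
      + (n : k) * (coeff 1 v) ^ (n - 1) * coeff (t + 1) v := by
  obtain ⟨M, rfl⟩ : ∃ M, n = M + 1 := ⟨n - 1, by omega⟩
  have hM : 1 ≤ M := by omega
  have hDcoeff : ∀ m < t + 1, coeff m (v - P) = 0 := by
    intro m hm; rw [map_sub, hP, if_pos hm, sub_self]
  have hD : (X : PowerSeries k) ^ (t+1) ∣ (v - P) := X_pow_dvd_iff.mpr hDcoeff
  have hPX : (X : PowerSeries k) ∣ P := by
    rw [← pow_one (X : PowerSeries k), X_pow_dvd_iff]
    intro m hm
    have : m = 0 := by omega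
    subst this
    rw [hP, if_pos (by omega), coeff_zero_eq_constantCoeff_apply, h0]
  have hP1 : coeff 1 P = coeff 1 v := by rw [hP, if_pos (by omega)]
  have hDt : coeff (t+1) (v - P) = coeff (t+1) v := by
    rw [map_sub, hP, if_neg (by omega), sub_zero]
  have hPlow : ∀ m < 1, coeff m P = 0 := by
    intro m hm
    have : m = 0 := by omega
    subst this
    rw [hP, if_pos (by omega), coeff_zero_eq_constantCoeff_apply, h0]
  have hv : v = P + (v - P) := by ring
  rw [hv, add_pow, map_sum, Finset.sum_range_succ, Finset.sum_range_succ]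
  have hzero : ∀ l ∈ Finset.range M,
      coeff ((M+1) + t) (P ^ l * (v - P) ^ (M + 1 - l) * ((M+1).choose l : PowerSeries k)) = 0 := by
    intro l hl
    rw [Finset.mem_range] at hl
    have hq : 2 ≤ M + 1 - l := by omega
    have h2 : (X : PowerSeries k) ^ (l + (t+1) * (M + 1 - l)) ∣
        P ^ l * (v - P) ^ (M + 1 - l) * ((M+1).choose l : PowerSeries k) := by
      apply Dvd.dvd.mul_right
      rw [pow_add]
      apply mul_dvd_mul
      · exact pow_dvd_pow_of_dvd hPX l
      · rw [pow_mul]; exact pow_dvd_pow_of_dvd hD _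
    apply X_pow_dvd_iff.mp h2
    have expand : l + (t+1) * (M + 1 - l) = l + (M + 1 - l) + t * (M + 1 - l) := by ring
    have : M + 1 - l + l = M + 1 := by omega
    nlinarith
  rw [Finset.sum_eq_zero hzero, zero_add]
  have hlast : P ^ (M+1) * (v - P) ^ (M + 1 - (M+1)) * ((M+1).choose (M+1) : PowerSeries k)
      = P ^ (M+1) := by
    rw [Nat.sub_self, pow_zero, Nat.choose_self]; simp
  rw [hlast]
  have hmid : coeff ((M+1)+t) (P ^ M * (v - P) ^ (M + 1 - M) * ((M+1).choose M : PowerSeries k))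
      = (M + 1 : k) * (coeff 1 v) ^ M * coeff (t+1) v := by
    have h1 : M + 1 - M = 1 := by omega
    rw [h1, pow_one, Nat.choose_succ_self_right]
    have hcast : ((M + 1 : ℕ) : PowerSeries k) = C ((M + 1 : ℕ) : k) := by
      rw [map_natCast C]
    rw [hcast, mul_comm (P ^ M * (v - P)) _, coeff_C_mul]
    have hPMlow : ∀ i < M, coeff i (P ^ M) = 0 := by
      intro i hi
      exact coeff_pow_vanish hPlow M i (by omega)
    have hidx : (M + 1) + t = M + (t + 1) := by omega
    rw [hidx, coeff_mul_top hPMlow hDcoeff]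
    have : coeff M (P ^ M) = (coeff 1 P) ^ M := by
      have := coeff_pow_order (b := P) (e := 1) hPlow M
      rwa [one_mul] at this
    rw [this, hP1, hDt]
    push_cast
    ring
  rw [hmid]
  have h2 : M + 1 - 1 = M := by omega
  rw [h2]
  push_cast
  ring

lemma coeff_comp_trunc {σ P A : PowerSeries k} {n t : ℕ}
    (hA : ∀ j < n, coeff j A = 0) (hn : 2 ≤ n) (ht : 1 ≤ t)
    (hσ0 : constantCoeff σ = 0)
    (hP : ∀ i, coeff i P = if i < t + 1 then coeff i σ else 0) :
    coeff (n + t) (comp σ A) = coeff (n + t) (comp P A) := by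
  have hsub : comp σ A - comp P A = comp (σ - P) A := (comp_sub σ P).symm
  have hzero : coeff (n + t) (comp (σ - P) A) = 0 := by
    rw [coeff_comp]
    apply Finset.sum_eq_zero
    intro i _
    by_cases hi : i < t + 1
    · rw [map_sub, hP, if_pos hi, sub_self, zero_mul]
    · have : n + t < n * i := by nlinarith
      rw [coeff_pow_vanish hA i _ this, mul_zero]
  have := congrArg (coeff (n + t)) hsub
  rw [map_sub] at this
  rw [hzero] at this
  exact sub_eq_zero.mp this
  
end Part4
section Part5
open CompAux
variable {k : Type*} [Field k]

/-- N-th root of a series with nonzero constant term, given a root of the constant term -/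
lemma nth_root_unit [CharZero k] {u : PowerSeries k} {N : ℕ} (hN : 1 ≤ N) (c : k) (hc : c ≠ 0)
    (hcN : c ^ N = constantCoeff u) : ∃ v, v ^ N = u ∧ constantCoeff v = c := by
  classical
  set g : ℕ → PowerSeries k → k := fun j T =>
    if j = 0 then c else (coeff j u - coeff j (T ^ N)) / ((N : k) * c ^ (N - 1)) with hg
  set v := buildS g with hv
  have hden : (N : k) * c ^ (N - 1) ≠ 0 := by
    apply mul_ne_zero
    · exact_mod_cast Nat.cast_ne_zero.mpr (by omega)
    · exact pow_ne_zero _ hc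
  have hv0 : constantCoeff v = c := by
    rw [← coeff_zero_eq_constantCoeff_apply, hv, coeff_buildS, hg]
    simp
  refine ⟨v, ?_, hv0⟩
  ext j
  rcases Nat.eq_zero_or_pos j with rfl | hj
  · rw [coeff_zero_eq_constantCoeff_apply, coeff_zero_eq_constantCoeff_apply, map_pow, hv0, hcN]
  · have hsplit := coeff_pow_split (v := v) (P := buildT g j) (j := j) (N := N)
      (by omega) hN (buildT_spec g j)
    have hvj : coeff j v = (coeff j u - coeff j ((buildT g j) ^ N)) / ((N : k) * c ^ (N - 1)) := by
      rw [hv, coeff_buildS, hg]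
      simp only [if_neg (by omega : ¬ j = 0)]
    rw [hsplit, hvj, hv0]
    field_simp
    rw [mul_div_cancel_left₀ _ (Nat.cast_ne_zero.mpr (by omega))]; ring

/-- rigidity: an N-th root of 1 in k[[X]] is constant (char 0) -/
lemma pow_eq_one_const [CharZero k] {u : PowerSeries k} {N : ℕ} (hN : 1 ≤ N)
    (hu : u ^ N = 1) : u = C (constantCoeff u) := by
  classical
  by_contra h
  have hex : ∃ j, coeff j u ≠ coeff j (C (constantCoeff u)) := by
    by_contra h2
    push_neg at h2
    exact h (PowerSeries.ext h2)
  set j := Nat.find hex with hjdef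
  have hjspec : coeff j u ≠ coeff j (C (constantCoeff u)) := Nat.find_spec hex
  have hjmin : ∀ m < j, coeff m u = coeff m (C (constantCoeff u)) := by
    intro m hm
    have := Nat.find_min hex hm
    push_neg at this
    exact this
  have hj0 : 1 ≤ j := by
    rcases Nat.eq_zero_or_pos j with hj | hj
    · exfalso; apply hjspec; rw [hj]; simp
    · exact hj
  have hu0 : constantCoeff u ^ N = 1 := by
    have := congrArg (constantCoeff) hu
    rw [map_pow] at this
    simpa using this
  have hu0ne : constantCoeff u ≠ 0 := by
    intro hz; rw [hz, zero_pow (by omega)] at hu0; exact zero_ne_one hu0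
  have hP : ∀ i, coeff i (C (constantCoeff u)) = if i < j then coeff i u else 0 := by
    intro i
    by_cases hi : i < j
    · rw [if_pos hi, ← hjmin i hi]
    · rw [if_neg hi, coeff_C, if_neg (by omega)]
  have hsplit := coeff_pow_split (v := u) (P := C (constantCoeff u)) hj0 hN hP
  rw [hu] at hsplit
  have hCpow : (C (constantCoeff u)) ^ N = 1 := by
    rw [← map_pow, hu0, map_one]
  rw [hCpow] at hsplit
  have h1 : coeff j (1 : PowerSeries k) = 0 := by
    rw [coeff_one, if_neg (by omega)]
  rw [h1] at hsplit
  have hzero : coeff j u = 0 := by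
    have hne : (N : k) * (constantCoeff u) ^ (N-1) ≠ 0 :=
      mul_ne_zero (Nat.cast_ne_zero.mpr (by omega)) (pow_ne_zero _ hu0ne)
    have h2 := hsplit
    rw [zero_add] at h2
    exact (mul_eq_zero.mp h2.symm).resolve_left hne
  apply hjspec
  rw [hzero, coeff_C, if_neg (by omega)]
end Part5
section Part6
open CompAux
variable {k : Type*} [Field k]

/-- powers of series agreeing below j agree at coefficient j, except in degree 1 -/
lemma coeff_pow_eq_of_agree {ψ P : PowerSeries k} {j i : ℕ} (hj : 1 ≤ j)
    (hψ0 : constantCoeff ψ = 0)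
    (hP : ∀ m, coeff m P = if m < j then coeff m ψ else 0) (hi : i ≠ 1) :
    coeff j (ψ ^ i) = coeff j (P ^ i) := by
  rcases Nat.eq_zero_or_pos i with rfl | hipos
  · rfl
  have hi2 : 2 ≤ i := by omega
  have hDcoeff : ∀ m < j, coeff m (ψ - P) = 0 := by
    intro m hm; rw [map_sub, hP, if_pos hm, sub_self]
  have hD : (X : PowerSeries k) ^ j ∣ (ψ - P) := X_pow_dvd_iff.mpr hDcoeff
  have hPX : (X : PowerSeries k) ∣ P := by
    rw [← pow_one (X : PowerSeries k), X_pow_dvd_iff]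
    intro m hm
    have : m = 0 := by omega
    subst this
    rw [hP, if_pos (by omega), coeff_zero_eq_constantCoeff_apply, hψ0]
  have hψeq : ψ = P + (ψ - P) := by ring
  rw [hψeq, add_pow, map_sum, Finset.sum_range_succ]
  have hzero : ∀ l ∈ Finset.range i,
      coeff j (P ^ l * (ψ - P) ^ (i - l) * (i.choose l : PowerSeries k)) = 0 := by
    intro l hl
    rw [Finset.mem_range] at hl
    have hq : 1 ≤ i - l := by omega
    have h2 : (X : PowerSeries k) ^ (l + j * (i - l)) ∣
        P ^ l * (ψ - P) ^ (i - l) * (i.choose l : PowerSeries k) := by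
      apply Dvd.dvd.mul_right
      rw [pow_add]
      apply mul_dvd_mul
      · exact pow_dvd_pow_of_dvd hPX l
      · rw [pow_mul]; exact pow_dvd_pow_of_dvd hD _
    apply X_pow_dvd_iff.mp h2
    rcases Nat.lt_or_ge l (i - 1) with h | h
    · have : 2 ≤ i - l := by omega
      nlinarith
    · have hl1 : l = i - 1 := by omega
      have : i - l = 1 := by omega
      rw [this, mul_one]
      omega
  rw [Finset.sum_eq_zero hzero, zero_add, Nat.sub_self, pow_zero, Nat.choose_self]
  simp

/-- isolation of the top coefficient of the inner series of a composition -/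
lemma coeff_comp_split {φ ψ P : PowerSeries k} {j : ℕ} (hj : 1 ≤ j)
    (hψ0 : constantCoeff ψ = 0)
    (hP : ∀ m, coeff m P = if m < j then coeff m ψ else 0) :
    coeff j (comp φ ψ) = coeff j (comp φ P) + coeff 1 φ * coeff j ψ := by
  rw [coeff_comp, coeff_comp]
  have key : ∀ i ∈ Finset.range (j + 1),
      coeff i φ * coeff j (ψ ^ i)
        = coeff i φ * coeff j (P ^ i)
          + (if i = 1 then coeff 1 φ * coeff j ψ else 0) := by
    intro i _
    by_cases hi : i = 1
    · subst hi
      rw [if_pos rfl, pow_one, pow_one, hP, if_neg (by omega)]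
      ring
    · rw [if_neg hi, coeff_pow_eq_of_agree hj hψ0 hP hi, add_zero]
  rw [Finset.sum_congr rfl key, Finset.sum_add_distrib]
  congr 1
  rw [Finset.sum_ite_eq' (Finset.range (j+1)) 1]
  rw [if_pos (Finset.mem_range.mpr (by omega))]

/-- existence of a right compositional inverse -/
lemma comp_right_inv {φ : PowerSeries k} (h0 : constantCoeff φ = 0)
    (h1 : coeff 1 φ ≠ 0) :
    ∃ ψ, constantCoeff ψ = 0 ∧ coeff 1 ψ ≠ 0 ∧ comp φ ψ = X := by
  classical
  set g : ℕ → PowerSeries k → k := fun j T =>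
    if j = 0 then 0 else (coeff j X - coeff j (comp φ T)) / coeff 1 φ with hg
  set ψ := buildS g with hψ
  have hψ0 : constantCoeff ψ = 0 := by
    rw [← coeff_zero_eq_constantCoeff_apply, hψ, coeff_buildS, hg]; simp
  have hcoeff : ∀ j, 1 ≤ j → coeff j (comp φ ψ) = coeff j X := by
    intro j hj
    have hsplit := coeff_comp_split (φ := φ) (ψ := ψ) (P := buildT g j) hj hψ0 (buildT_spec g j)
    have hvj : coeff j ψ = (coeff j X - coeff j (comp φ (buildT g j))) / coeff 1 φ := by
      rw [hψ, coeff_buildS, hg]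
      simp only [if_neg (by omega : ¬ j = 0)]
    rw [hsplit, hvj]
    field_simp
    ring
  have hcomp : comp φ ψ = X := by
    ext j
    rcases Nat.eq_zero_or_pos j with rfl | hj
    · rw [coeff_zero_eq_constantCoeff_apply, coeff_zero_eq_constantCoeff_apply,
        constantCoeff_comp, h0, constantCoeff_X]
    · exact hcoeff j hj
  refine ⟨ψ, hψ0, ?_, hcomp⟩
  have := coeff_one_comp' (a := φ) (b := ψ)
  rw [hcomp, coeff_X] at this
  intro hz
  rw [hz, mul_zero] at this
  simpa using this

/-- two-sided compositional inverse -/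
lemma comp_inv {φ : PowerSeries k} (h0 : constantCoeff φ = 0)
    (h1 : coeff 1 φ ≠ 0) :
    ∃ ψ, constantCoeff ψ = 0 ∧ coeff 1 ψ ≠ 0 ∧ comp φ ψ = X ∧ comp ψ φ = X := by
  obtain ⟨ψ, hψ0, hψ1, hψr⟩ := comp_right_inv h0 h1
  obtain ⟨ρ, hρ0, hρ1, hρr⟩ := comp_right_inv hψ0 hψ1
  have hφρ : φ = ρ := by
    have h2 : comp (comp φ ψ) ρ = ρ := by rw [hψr, comp_X_left hρ0]
    rw [comp_assoc φ hψ0 hρ0, hρr, comp_X_right] at h2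
    exact h2
  exact ⟨ψ, hψ0, hψ1, hψr, hφρ ▸ hρr⟩

/-- Böttcher coordinates -/
lemma boettcher [CharZero k] {A : PowerSeries k} {n : ℕ} (hn : 2 ≤ n)
    (hAlow : ∀ j < n, coeff j A = 0) (c : k) (hc : c ≠ 0)
    (hcn : c ^ (n - 1) = coeff n A) :
    ∃ σ, constantCoeff σ = 0 ∧ coeff 1 σ = c ∧ comp σ A = σ ^ n := by
  classical
  set g : ℕ → PowerSeries k → k := fun j T =>
    if j = 0 then 0 else if j = 1 then c
    else (coeff (n + j - 1) (comp T A) - coeff (n + j - 1) (T ^ n)) / ((n : k) * c ^ (n - 1))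
    with hg
  set σ := buildS g with hσ
  have hden : (n : k) * c ^ (n - 1) ≠ 0 :=
    mul_ne_zero (Nat.cast_ne_zero.mpr (by omega)) (pow_ne_zero _ hc)
  have hσ0 : constantCoeff σ = 0 := by
    rw [← coeff_zero_eq_constantCoeff_apply, hσ, coeff_buildS, hg]; simp
  have hσ1 : coeff 1 σ = c := by
    rw [hσ, coeff_buildS, hg]; simp
  refine ⟨σ, hσ0, hσ1, ?_⟩
  ext m
  rcases Nat.lt_or_ge m n with hm | hm
  · -- m < n : both vanish
    have hL : coeff m (comp σ A) = 0 := by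
      rw [coeff_comp]
      apply Finset.sum_eq_zero
      intro i _
      rcases Nat.eq_zero_or_pos i with rfl | hi
      · rw [← coeff_zero_eq_constantCoeff_apply] at hσ0
        rw [hσ0, zero_mul]
      · rw [coeff_pow_vanish hAlow i m (by nlinarith), mul_zero]
    rw [hL, coeff_pow_vanish0 hσ0 (by omega)]
  rcases Nat.eq_or_lt_of_le hm with hm' | hm'
  · -- m = n
    have hmn : m = n := hm'.symm
    subst hmn
    have hL : coeff m (comp σ A) = c * coeff m A := by
      rw [coeff_comp, Finset.sum_eq_single 1]
      · rw [pow_one, hσ1]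
      · intro i _ hi
        rcases Nat.eq_zero_or_pos i with rfl | hipos
        · rw [← coeff_zero_eq_constantCoeff_apply] at hσ0
          rw [hσ0, zero_mul]
        · have hi2 : 2 ≤ i := by omega
          rw [coeff_pow_vanish hAlow i m (by nlinarith), mul_zero]
      · intro hmem; exact absurd (Finset.mem_range.mpr (by omega)) hmem
    have hR : coeff m (σ ^ m) = c ^ m := by
      have hσlow : ∀ j < 1, coeff j σ = 0 := by
        intro j hj
        have : j = 0 := by omega
        subst this
        rw [coeff_zero_eq_constantCoeff_apply, hσ0]
      have := coeff_pow_order (b := σ) (e := 1) hσlow m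
      rw [one_mul, hσ1] at this
      exact this
    rw [hL, hR, ← hcn]
    have : c * c ^ (m - 1) = c ^ m := by
      rw [← pow_succ']
      congr 1
      omega
    rw [this]
  · -- m = n + t, t ≥ 1
    obtain ⟨t, rfl⟩ : ∃ t, m = n + t := ⟨m - n, by omega⟩
    have ht : 1 ≤ t := by omega
    have hLtrunc := coeff_comp_trunc (σ := σ) (P := buildT g (t+1)) (A := A)
      hAlow hn ht hσ0 (buildT_spec g (t+1))
    have hRsplit := coeff_pow_split' (v := σ) (P := buildT g (t+1)) hn ht hσ0
      (buildT_spec g (t+1))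
    have hvt : coeff (t+1) σ = (coeff (n + t) (comp (buildT g (t+1)) A)
        - coeff (n + t) ((buildT g (t+1)) ^ n)) / ((n : k) * c ^ (n - 1)) := by
      rw [hσ, coeff_buildS, hg]
      simp only [if_neg (by omega : ¬ t + 1 = 0), if_neg (by omega : ¬ t + 1 = 1)]
      have : n + (t + 1) - 1 = n + t := by omega
      rw [this]
    rw [hLtrunc, hRsplit, hσ1, hvt]
    field_simp
    rw [mul_div_cancel_left₀ _ (Nat.cast_ne_zero.mpr (by omega))]; ring


end Part6
section Part7
open CompAux
variable {k : Type*} [Field k]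

/-- factor out X from a series with zero constant term -/
lemma X_factor {h : PowerSeries k} (h0 : constantCoeff h = 0) :
    h = X * PowerSeries.mk (fun i => coeff (i + 1) h) := by
  ext n
  rcases Nat.eq_zero_or_pos n with rfl | hn
  · rw [coeff_zero_eq_constantCoeff_apply, h0, coeff_zero_eq_constantCoeff_apply, map_mul,
      constantCoeff_X, zero_mul]
  · obtain ⟨i, rfl⟩ : ∃ i, n = i + 1 := ⟨n - 1, by omega⟩
    rw [coeff_succ_X_mul, coeff_mk]

/-- factor out X^N from a series of order N -/
lemma X_pow_factor {F : PowerSeries k} {N : ℕ} (hlow : ∀ j < N, coeff j F = 0) :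
    F = X ^ N * PowerSeries.mk (fun i => coeff (N + i) F) := by
  ext n
  rw [PowerSeries.coeff_X_pow_mul']
  by_cases h : N ≤ n
  · rw [if_pos h, coeff_mk]
    have hidx : N + (n - N) = n := by omega
    rw [hidx]
  · rw [if_neg h]
    exact hlow n (by omega)

/-- compositional cancellation on the left -/
lemma comp_cancel_left {σ ι g h : PowerSeries k} (hσ0 : constantCoeff σ = 0)
    (hι0 : constantCoeff ι = 0) (hinv : comp ι σ = X)
    (hg : constantCoeff g = 0) (hh : constantCoeff h = 0)
    (heq : comp σ g = comp σ h) : g = h := by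
  have h1 : comp ι (comp σ g) = comp ι (comp σ h) := by rw [heq]
  rw [← comp_assoc ι hσ0 hg, ← comp_assoc ι hσ0 hh, hinv, comp_X_left hg, comp_X_left hh] at h1
  exact h1

/-- compositional cancellation on the right -/
lemma comp_cancel_right {σ ι g h : PowerSeries k} (hσ0 : constantCoeff σ = 0)
    (hι0 : constantCoeff ι = 0) (hinv : comp σ ι = X)
    (heq : comp g σ = comp h σ) : g = h := by
  have h1 : comp (comp g σ) ι = comp (comp h σ) ι := by rw [heq]
  rw [comp_assoc g hσ0 hι0, comp_assoc h hσ0 hι0, hinv, comp_X_right, comp_X_right] at h1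
  exact h1

/-- the scaling lemma: any order-1 symmetry of F = τ^N scales τ by an N-th root of 1 -/
lemma scale_lemma [CharZero k] {F τ φ : PowerSeries k} {N : ℕ} (hN : 1 ≤ N)
    (hτ0 : constantCoeff τ = 0) (hτ1 : coeff 1 τ ≠ 0) (hτN : τ ^ N = F)
    (hφ0 : constantCoeff φ = 0) (hφ1 : coeff 1 φ ≠ 0)
    (hfix : comp F φ = F) :
    ∃ ζ : k, ζ ^ N = 1 ∧ comp τ φ = C ζ * τ := by
  classical
  set v := PowerSeries.mk (fun i => coeff (i + 1) τ) with hvdef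
  have hτv : τ = X * v := X_factor hτ0
  have hv0 : constantCoeff v ≠ 0 := by
    rw [← coeff_zero_eq_constantCoeff_apply, hvdef, coeff_mk]
    exact hτ1
  set w := comp τ φ with hwdef
  have hw0 : constantCoeff w = 0 := by rw [hwdef, constantCoeff_comp, hτ0]
  have hw1 : coeff 1 w ≠ 0 := by
    rw [hwdef, coeff_one_comp']
    exact mul_ne_zero hτ1 hφ1
  set r := PowerSeries.mk (fun i => coeff (i + 1) w) with hrdef
  have hwr : w = X * r := X_factor hw0
  have hr0 : constantCoeff r ≠ 0 := by
    rw [← coeff_zero_eq_constantCoeff_apply, hrdef, coeff_mk]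
    exact hw1
  have hwN : w ^ N = F := by
    rw [hwdef, ← comp_pow hφ0, hτN, hfix]
  have hXrv : (X : PowerSeries k) ^ N * r ^ N = (X : PowerSeries k) ^ N * v ^ N := by
    have e1 : (X * r) ^ N = (X * v) ^ N := by
      rw [← hwr, ← hτv, hwN, hτN]
    rw [mul_pow, mul_pow] at e1
    exact e1
  have hrv : r ^ N = v ^ N := by
    have hXN : (X : PowerSeries k) ^ N ≠ 0 := pow_ne_zero _ PowerSeries.X_ne_zero
    exact mul_left_cancel₀ hXN hXrv
  -- w0 := r * v⁻¹ is an N-th root of unity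
  have hvinv : v * v⁻¹ = 1 := PowerSeries.mul_inv_cancel v hv0
  set q := r * v⁻¹ with hq
  have hqN : q ^ N = 1 := by
    rw [hq, mul_pow, hrv, ← mul_pow, hvinv, one_pow]
  have hqC : q = C (constantCoeff q) := pow_eq_one_const hN hqN
  have hζN : (constantCoeff q) ^ N = 1 := by
    have := congrArg (constantCoeff) hqN
    rw [map_pow] at this
    simpa using this
  refine ⟨constantCoeff q, hζN, ?_⟩
  have hrq : r = C (constantCoeff q) * v := by
    have : q * v = r * (v⁻¹ * v) := by rw [hq]; ring
    rw [PowerSeries.inv_mul_cancel v hv0] at this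
    rw [mul_one] at this
    rw [hqC] at this
    exact this.symm
  rw [hwdef] at hwr ⊢
  rw [hwr, hrq]
  rw [hτv]
  ring
end Part7
section Part8
open CompAux
variable {k : Type*} [Field k]

lemma order_one_iff {φ : PowerSeries k} :
    φ.order = 1 ↔ constantCoeff φ = 0 ∧ coeff 1 φ ≠ 0 := by
  rw [show (1 : ℕ∞) = ((1:ℕ) : ℕ∞) by rfl, PowerSeries.order_eq_nat]
  constructor
  · rintro ⟨h1, h2⟩
    refine ⟨?_, h1⟩
    rw [← coeff_zero_eq_constantCoeff_apply]
    exact h2 0 (by omega)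
  · rintro ⟨h1, h2⟩
    refine ⟨h2, ?_⟩
    intro i hi
    have : i = 0 := by omega
    subst this
    rw [coeff_zero_eq_constantCoeff_apply]
    exact h1

lemma forward_direction [CharZero k] [IsAlgClosed k] {A B Xs Ys : PowerSeries k}
    (hA0 : constantCoeff A = 0) (hB0 : constantCoeff B = 0)
    (hA : A ≠ 0) (hXs : Xs ≠ 0) (hXs0 : constantCoeff Xs = 0)
    (hEq : comp Xs A = comp Ys B)
    {φA φB : PowerSeries k}
    (hφA : φA.order = 1) (hfixA : comp A φA = A)
    (hφB : φB.order = 1) (hfixB : comp B φB = B) :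
    comp φA φB = comp φB φA := by
  obtain ⟨hφA0, hφA1⟩ := order_one_iff.mp hφA
  obtain ⟨hφB0, hφB1⟩ := order_one_iff.mp hφB
  set F := comp Xs A with hF
  have hFne : F ≠ 0 := comp_ne_zero hXs hA0 hA
  have hF0 : constantCoeff F = 0 := by rw [hF, constantCoeff_comp, hXs0]
  obtain ⟨N, hNord, hFN, hFlow⟩ := ord_data hFne
  have hN : 1 ≤ N := by
    by_contra h
    have : N = 0 := by omega
    subst this
    rw [coeff_zero_eq_constantCoeff_apply] at hFN
    exact hFN hF0
  set u := PowerSeries.mk (fun i => coeff (N + i) F) with hu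
  have hFu : F = X ^ N * u := X_pow_factor hFlow
  have hu0 : constantCoeff u ≠ 0 := by
    rw [← coeff_zero_eq_constantCoeff_apply, hu, coeff_mk]
    simpa using hFN
  obtain ⟨c, hc⟩ := IsAlgClosed.exists_pow_nat_eq (constantCoeff u) (show 0 < N by omega)
  have hcne : c ≠ 0 := by
    intro h
    rw [h, zero_pow (by omega)] at hc
    exact hu0 hc.symm
  obtain ⟨v, hvN, hv0⟩ := nth_root_unit hN c hcne hc
  set τ := X * v with hτ
  have hτN : τ ^ N = F := by rw [hτ, mul_pow, hvN, ← hFu]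
  have hτ0 : constantCoeff τ = 0 := by
    rw [hτ, map_mul, constantCoeff_X, zero_mul]
  have hτ1 : coeff 1 τ ≠ 0 := by
    rw [hτ, show (1:ℕ) = 0 + 1 by rfl, coeff_succ_X_mul, coeff_zero_eq_constantCoeff_apply, hv0]
    exact hcne
  -- both φA and φB fix F
  have hfixFA : comp F φA = F := by
    rw [hF, comp_assoc Xs hA0 hφA0, hfixA]
  have hfixFB : comp F φB = F := by
    rw [hEq, comp_assoc Ys hB0 hφB0, hfixB]
  obtain ⟨ζA, hζAN, hζA⟩ := scale_lemma hN hτ0 hτ1 hτN hφA0 hφA1 hfixFA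
  obtain ⟨ζB, hζBN, hζB⟩ := scale_lemma hN hτ0 hτ1 hτN hφB0 hφB1 hfixFB
  obtain ⟨ι, hι0, hι1, hrinv, hlinv⟩ := comp_inv hτ0 hτ1
  have hAB0 : constantCoeff (comp φA φB) = 0 := by rw [constantCoeff_comp, hφA0]
  have hBA0 : constantCoeff (comp φB φA) = 0 := by rw [constantCoeff_comp, hφB0]
  apply comp_cancel_left hτ0 hι0 hlinv hAB0 hBA0
  have e1 : comp τ (comp φA φB) = C ζA * (C ζB * τ) := by
    rw [← comp_assoc τ hφA0 hφB0, hζA, comp_C_mul, hζB]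
  have e2 : comp τ (comp φB φA) = C ζB * (C ζA * τ) := by
    rw [← comp_assoc τ hφB0 hφA0, hζB, comp_C_mul, hζA]
  rw [e1, e2]
  ring
end Part8
section Part9
open CompAux
variable {k : Type*} [Field k]

/-- data of a Böttcher coordinate system for A -/
structure BData (k : Type*) [Field k] (A : PowerSeries k) (n : ℕ) where
  σ : PowerSeries k
  ι : PowerSeries k
  hn : 2 ≤ n
  hσ0 : constantCoeff σ = 0
  hσ1 : coeff 1 σ ≠ 0
  hι0 : constantCoeff ι = 0
  hι1 : coeff 1 ι ≠ 0
  hrinv : comp σ ι = X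
  hlinv : comp ι σ = X
  hA0 : constantCoeff A = 0
  hbo : comp σ A = σ ^ n

namespace BData

variable {A : PowerSeries k} {n : ℕ} (D : BData k A n)

/-- the transition function attached to an n-th root of unity -/
noncomputable def trans (ζ : k) : PowerSeries k := comp D.ι (C ζ * D.σ)

lemma trans_const (ζ : k) : constantCoeff (D.trans ζ) = 0 := by
  rw [trans, constantCoeff_comp, D.hι0]

lemma const_C_mul_σ (ζ : k) : constantCoeff (C ζ * D.σ) = 0 := by
  rw [map_mul, D.hσ0, mul_zero]

lemma σ_trans (ζ : k) : comp D.σ (D.trans ζ) = C ζ * D.σ := by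
  rw [trans, ← comp_assoc D.σ D.hι0 (D.const_C_mul_σ ζ), D.hrinv,
    comp_X_left (D.const_C_mul_σ ζ)]

lemma trans_coeff_one {ζ : k} (hζ : ζ ≠ 0) : coeff 1 (D.trans ζ) ≠ 0 := by
  rw [trans, coeff_one_comp', coeff_C_mul]
  exact mul_ne_zero D.hι1 (mul_ne_zero hζ D.hσ1)

lemma trans_order {ζ : k} (hζ : ζ ≠ 0) : (D.trans ζ).order = 1 :=
  order_one_iff.mpr ⟨D.trans_const ζ, D.trans_coeff_one hζ⟩

lemma trans_fix {ζ : k} (hζ : ζ ^ n = 1) : comp A (D.trans ζ) = A := by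
  have hζne : ζ ≠ 0 := by
    intro h; rw [h, zero_pow (by have := D.hn; omega)] at hζ; exact zero_ne_one hζ
  apply comp_cancel_left D.hσ0 D.hι0 D.hlinv
    (by rw [constantCoeff_comp, D.hA0]) D.hA0
  rw [← comp_assoc D.σ D.hA0 (D.trans_const ζ), D.hbo, comp_pow (D.trans_const ζ),
    D.σ_trans, mul_pow, ← map_pow, hζ, map_one, one_mul]

end BData

/-- invariance under the Böttcher torus implies membership in the image of `comp · A` -/
lemma invariance_to_membership [CharZero k] {A F : PowerSeries k} {n : ℕ}
    (D : BData k A n) {ζ₀ : k} (hζ₀ : IsPrimitiveRoot ζ₀ n)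
    (hF0 : constantCoeff F = 0)
    (hinvar : ∀ ζ : k, ζ ^ n = 1 → comp F (D.trans ζ) = F) :
    ∃ Xs, constantCoeff Xs = 0 ∧ comp Xs A = F ∧ (F ≠ 0 → Xs ≠ 0) := by
  classical
  set Fa := comp F D.ι with hFa
  have hFa0 : constantCoeff Fa = 0 := by rw [hFa, constantCoeff_comp, hF0]
  have hFaσ : comp Fa D.σ = F := by
    rw [hFa, comp_assoc F D.hι0 D.hσ0, D.hlinv, comp_X_right]
  have step1 : ∀ ζ : k, ζ ^ n = 1 → comp Fa (C ζ * X) = Fa := by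
    intro ζ hζ
    have hCX0 : constantCoeff (C ζ * X) = 0 := by
      rw [map_mul, constantCoeff_X, mul_zero]
    set E := comp D.ι (C ζ * X) with hE
    have hE0 : constantCoeff E = 0 := by rw [hE, constantCoeff_comp, D.hι0]
    have hEσ : comp E D.σ = D.trans ζ := by
      rw [hE, comp_assoc D.ι hCX0 D.hσ0, BData.trans]
      congr 1
      rw [comp_C_mul, comp_X_left D.hσ0]
    have hFaCX : comp Fa (C ζ * X) = comp F E := by
      rw [hFa, hE, comp_assoc F D.hι0 hCX0]
    apply comp_cancel_right D.hσ0 D.hι0 D.hrinv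
    rw [hFaCX, comp_assoc F hE0 D.hσ0, hEσ, hinvar ζ hζ, hFaσ]
  have step2 : ∀ m : ℕ, ¬ (n ∣ m) → coeff m Fa = 0 := by
    intro m hm
    have h1 := congrArg (coeff m) (step1 ζ₀ hζ₀.pow_eq_one)
    rw [coeff_comp_C_mul_X] at h1
    have hζm : ζ₀ ^ m ≠ 1 := fun h => hm ((hζ₀.pow_eq_one_iff_dvd m).mp h)
    by_contra h2
    apply hζm
    have h3 : (ζ₀ ^ m - 1) * coeff m Fa = 0 := by rw [sub_mul, one_mul, h1, sub_self]
    rcases mul_eq_zero.mp h3 with h4 | h4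
    · exact sub_eq_zero.mp h4
    · exact absurd h4 h2
  set Xa := PowerSeries.mk (fun i => coeff (n * i) Fa) with hXa
  have hn1 : 1 ≤ n := by have := D.hn; omega
  have hXaF : comp Xa (X ^ n) = Fa := by
    ext m
    rw [coeff_comp_X_pow hn1]
    by_cases h : n ∣ m
    · rw [if_pos h, hXa, coeff_mk, Nat.mul_div_cancel' h]
    · rw [if_neg h, (step2 m h)]
  have hXn0 : constantCoeff ((X : PowerSeries k) ^ n) = 0 := by
    rw [map_pow, constantCoeff_X, zero_pow (by omega)]
  have hkey : comp Xa (D.σ ^ n) = F := by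
    rw [← hFaσ, ← hXaF, comp_assoc Xa hXn0 D.hσ0, comp_pow D.hσ0, comp_X_left D.hσ0]
  refine ⟨comp Xa D.σ, ?_, ?_, ?_⟩
  · rw [constantCoeff_comp, ← coeff_zero_eq_constantCoeff_apply, hXa, coeff_mk, mul_zero,
      coeff_zero_eq_constantCoeff_apply, hFa0]
  · rw [comp_assoc Xa D.hσ0 D.hA0, D.hbo, hkey]
  · intro hFne h0
    apply hFne
    rw [← hkey]
    have hXa0 : Xa = 0 := by
      by_contra hXane
      exact absurd (comp_ne_zero hXane D.hσ0 (by
        intro hσz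
        exact D.hσ1 (by rw [hσz, map_zero]))) (by rw [h0]; simp)
    rw [hXa0, comp_zero]
end Part9
section Part10
open CompAux
variable {k : Type*} [Field k]

lemma pow_mod_eq {ξ : k} {m : ℕ} (h : ξ ^ m = 1) (x : ℕ) : ξ ^ (x % m) = ξ ^ x := by
  conv_rhs => rw [← Nat.mod_add_div x m]
  rw [pow_add, pow_mul, h, one_pow, mul_one]

lemma exists_BData [CharZero k] [IsAlgClosed k] {A : PowerSeries k}
    (hA : A ≠ 0) (hA2 : 2 ≤ A.order) :
    ∃ n : ℕ, A.order = (n : ℕ∞) ∧ ∃ _ : BData k A n, True := by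
  obtain ⟨n, hnord, hAn, hAlow⟩ := ord_data hA
  have hn : 2 ≤ n := by
    rw [hnord] at hA2
    exact_mod_cast hA2
  have hA0 : constantCoeff A = 0 := by
    rw [← coeff_zero_eq_constantCoeff_apply]
    exact hAlow 0 (by omega)
  obtain ⟨c, hc⟩ := IsAlgClosed.exists_pow_nat_eq (coeff n A) (show 0 < n - 1 by omega)
  have hcne : c ≠ 0 := by
    intro h
    rw [h, zero_pow (by omega)] at hc
    exact hAn hc.symm
  obtain ⟨σ, hσ0, hσ1, hbo⟩ := boettcher hn hAlow c hcne hc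
  have hσ1ne : coeff 1 σ ≠ 0 := by rw [hσ1]; exact hcne
  obtain ⟨ι, hι0, hι1, hrinv, hlinv⟩ := comp_inv hσ0 hσ1ne
  exact ⟨n, hnord, ⟨⟨σ, ι, hn, hσ0, hσ1ne, hι0, hι1, hrinv, hlinv, hA0, hbo⟩, trivial⟩⟩

lemma reverse_direction [CharZero k] [IsAlgClosed k] {A B : PowerSeries k}
    (hA : A ≠ 0) (hA2 : 2 ≤ A.order) (hB : B ≠ 0) (hB2 : 2 ≤ B.order)
    (hcomm : ∀ φA φB : PowerSeries k, φA.order = 1 → comp A φA = A →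
      φB.order = 1 → comp B φB = B → comp φA φB = comp φB φA) :
    ∃ Xs Ys : PowerSeries k, Xs ≠ 0 ∧ Ys ≠ 0 ∧
      constantCoeff Xs = 0 ∧ constantCoeff Ys = 0 ∧ comp Xs A = comp Ys B := by
  classical
  obtain ⟨n, hnord, DA, -⟩ := exists_BData hA hA2
  obtain ⟨m, hmord, DB, -⟩ := exists_BData hB hB2
  have hn : 2 ≤ n := DA.hn
  have hm : 2 ≤ m := DB.hn
  haveI : NeZero ((n : k)) := ⟨Nat.cast_ne_zero.mpr (by omega)⟩
  haveI : NeZero ((m : k)) := ⟨Nat.cast_ne_zero.mpr (by omega)⟩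
  haveI hmz : NeZero m := ⟨by omega⟩
  haveI hnz : NeZero n := ⟨by omega⟩
  obtain ⟨ζ₀, hζ₀⟩ := HasEnoughRootsOfUnity.exists_primitiveRoot k n
  obtain ⟨ξ₀, hξ₀⟩ := HasEnoughRootsOfUnity.exists_primitiveRoot k m
  set χ : ZMod m → k := fun j => ξ₀ ^ j.val with hχ
  have hχpow : ∀ j, (χ j) ^ m = 1 := by
    intro j
    rw [hχ, ← pow_mul, mul_comm, pow_mul, hξ₀.pow_eq_one, one_pow]
  have hχne : ∀ j, χ j ≠ 0 := by
    intro j h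
    have := hχpow j
    rw [h, zero_pow (by omega)] at this
    exact zero_ne_one this
  have hχadd : ∀ i j : ZMod m, χ (i + j) = χ i * χ j := by
    intro i j
    rw [hχ]
    simp only
    rw [ZMod.val_add, pow_mod_eq hξ₀.pow_eq_one, pow_add]
  set Ψ : ZMod m → PowerSeries k := fun j => DB.trans (χ j) with hΨ
  have hΨ0 : ∀ j, constantCoeff (Ψ j) = 0 := fun j => DB.trans_const _
  have hΨord : ∀ j, (Ψ j).order = 1 := fun j => DB.trans_order (hχne j)
  have hΨfix : ∀ j, comp B (Ψ j) = B := fun j => DB.trans_fix (hχpow j)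
  set F₁ : PowerSeries k := ∏ j : ZMod m, comp DA.σ (Ψ j) with hF₁
  set F : PowerSeries k := F₁ ^ n with hF
  have hfac_ne : ∀ j, comp DA.σ (Ψ j) ≠ 0 := by
    intro j h
    have h1 : coeff 1 (comp DA.σ (Ψ j)) = 0 := by rw [h, map_zero]
    rw [coeff_one_comp'] at h1
    exact (mul_ne_zero DA.hσ1 (DB.trans_coeff_one (hχne j))) h1
  have hF₁ne : F₁ ≠ 0 := by
    rw [hF₁]
    exact Finset.prod_ne_zero_iff.mpr fun j _ => hfac_ne j
  have hFne : F ≠ 0 := pow_ne_zero _ hF₁ne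
  have hF₁0 : constantCoeff F₁ = 0 := by
    rw [hF₁, map_prod]
    apply Finset.prod_eq_zero (Finset.mem_univ (0 : ZMod m))
    rw [constantCoeff_comp, DA.hσ0]
  have hF0 : constantCoeff F = 0 := by
    rw [hF, map_pow, hF₁0, zero_pow (by omega)]
  -- invariance under the transition functions of B
  have hinvB : ∀ ξ : k, ξ ^ m = 1 → comp F (DB.trans ξ) = F := by
    intro ξ hξ
    obtain ⟨j₀, hj₀lt, hj₀⟩ := hξ₀.eq_pow_of_pow_eq_one hξ
    set c₀ : ZMod m := (j₀ : ZMod m) with hc₀def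
    have hc₀ : χ c₀ = ξ := by
      rw [hχ]
      simp only
      rw [hc₀def, ZMod.val_natCast_of_lt hj₀lt, hj₀]
    have htr0 : constantCoeff (DB.trans ξ) = 0 := DB.trans_const ξ
    have key : ∀ j, comp (Ψ j) (DB.trans ξ) = Ψ (j + c₀) := by
      intro j
      rw [hΨ]
      simp only
      rw [BData.trans, comp_assoc DB.ι (DB.const_C_mul_σ (χ j)) htr0]
      congr 1
      rw [comp_C_mul, DB.σ_trans ξ, hχadd, hc₀, ← mul_assoc, ← map_mul]
    have e1 : comp F₁ (DB.trans ξ) = F₁ := by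
      rw [hF₁, comp_prod htr0]
      have e2 : ∀ j : ZMod m, comp (comp DA.σ (Ψ j)) (DB.trans ξ)
          = comp DA.σ (Ψ (j + c₀)) := by
        intro j
        rw [comp_assoc DA.σ (hΨ0 j) htr0, key]
      rw [Finset.prod_congr rfl (fun j _ => e2 j)]
      exact Equiv.prod_comp (Equiv.addRight c₀) (fun j => comp DA.σ (Ψ j))
    rw [hF, comp_pow htr0, e1]
  -- invariance under the transition functions of A
  have hinvA : ∀ ζ : k, ζ ^ n = 1 → comp F (DA.trans ζ) = F := by
    intro ζ hζ
    have hζne : ζ ≠ 0 := by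
      intro h
      rw [h, zero_pow (by omega)] at hζ
      exact zero_ne_one hζ
    have htr0 : constantCoeff (DA.trans ζ) = 0 := DA.trans_const ζ
    have hcommj : ∀ j, comp (DA.trans ζ) (Ψ j) = comp (Ψ j) (DA.trans ζ) :=
      fun j => hcomm (DA.trans ζ) (Ψ j) (DA.trans_order hζne) (DA.trans_fix hζ)
        (hΨord j) (hΨfix j)
    have e1 : comp F₁ (DA.trans ζ) = (C ζ) ^ m * F₁ := by
      rw [hF₁, comp_prod htr0]
      have e2 : ∀ j : ZMod m, comp (comp DA.σ (Ψ j)) (DA.trans ζ)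
          = C ζ * comp DA.σ (Ψ j) := by
        intro j
        rw [comp_assoc DA.σ (hΨ0 j) htr0, ← hcommj j,
          ← comp_assoc DA.σ htr0 (hΨ0 j), DA.σ_trans ζ, comp_C_mul]
      rw [Finset.prod_congr rfl (fun j _ => e2 j), Finset.prod_mul_distrib,
        Finset.prod_const, Finset.card_univ, ZMod.card]
    have hζmn : (C ζ) ^ (m * n) = 1 := by
      rw [← map_pow, mul_comm, pow_mul, hζ, one_pow, map_one]
    rw [hF, comp_pow htr0, e1, mul_pow, ← pow_mul, hζmn, one_mul]
  obtain ⟨Xs, hXs0, hXsA, hXsne⟩ := invariance_to_membership DA hζ₀ hF0 hinvA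
  obtain ⟨Ys, hYs0, hYsB, hYsne⟩ := invariance_to_membership DB hξ₀ hF0 hinvB
  exact ⟨Xs, Ys, hXsne hFne, hYsne hFne, hXs0, hYs0, by rw [hXsA, hYsB]⟩
end Part10

section Main
open CompAux

theorem stmt19 {k : Type*} [Field k] [IsAlgClosed k] [CharZero k]
    (A B : PowerSeries k)
    (hA : A ≠ 0) (hA2 : 2 ≤ A.order) (hB : B ≠ 0) (hB2 : 2 ≤ B.order) :
    (∃ Xs Ys : PowerSeries k, Xs ≠ 0 ∧ Ys ≠ 0 ∧
        constantCoeff Xs = 0 ∧ constantCoeff Ys = 0 ∧ comp Xs A = comp Ys B) ↔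
      ∀ φA φB : PowerSeries k, φA.order = 1 → comp A φA = A →
        φB.order = 1 → comp B φB = B → comp φA φB = comp φB φA := by
  have hA0 : constantCoeff A = 0 := by
    rw [← coeff_zero_eq_constantCoeff_apply]
    apply PowerSeries.coeff_of_lt_order
    exact lt_of_lt_of_le (by norm_num) hA2
  have hB0 : constantCoeff B = 0 := by
    rw [← coeff_zero_eq_constantCoeff_apply]
    apply PowerSeries.coeff_of_lt_order
    exact lt_of_lt_of_le (by norm_num) hB2
  constructor
  · rintro ⟨Xs, Ys, hXsne, hYsne, hXs0, hYs0, hEq⟩ φA φB hφA hfixA hφB hfixB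
    exact forward_direction hA0 hB0 hA hXsne hXs0 hEq hφA hfixA hφB hfixB
  · intro hcomm
    exact reverse_direction hA hA2 hB hB2 hcomm

end Main
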